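/- Let M : [0,T] → ℝ be a non-negative continuous function satisfying M(t) ≤ c₁ + c₂ M(t)^κ for all t in [0,T], where c₁, c₂ > 0 and κ > 1. If M(0) ≤ c₁ and c₁ · c₂^(1/(κ-1)) < (1 - 1/κ) · κ^(-1/(κ-1)), then M(t) < c₁ / (1 - 1/κ) for all t in [0,T]. -/
import Mathlib


open Set

/-- Strauss barrier lemma: a nonnegative continuous function obeying a superlinear
self-bound with small coefficients stays below the barrier `c₁ / (1 - 1/κ)`. -/
theorem strauss_lemma (T c₁ c₂ κ : ℝ) (M : ℝ → ℝ)
    (hT : 0 ≤ T) (hc₁ : 0 < c₁) (hc₂ : 0 < c₂) (hκ : 1 < κ)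
    (hMcont : ContinuousOn M (Icc 0 T))
    (hMnonneg : ∀ t ∈ Icc 0 T, 0 ≤ M t)
    (hMineq : ∀ t ∈ Icc 0 T, M t ≤ c₁ + c₂ * M t ^ κ)
    (hM0 : M 0 ≤ c₁)
    (hsmall : c₁ * c₂ ^ (1 / (κ - 1)) < (1 - 1 / κ) * κ ^ (-(1 / (κ - 1)))) :
    ∀ t ∈ Icc 0 T, M t < c₁ / (1 - 1 / κ) := by
  have hκ0 : (0:ℝ) < κ := by linarith
  have h1 : 0 < 1 - 1 / κ := by
    have : 1 / κ < 1 := by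
      rw [div_lt_one hκ0]; exact hκ
    linarith
  set B := c₁ / (1 - 1 / κ) with hBdef
  have hB : 0 < B := div_pos hc₁ h1
  have hκ1 : 0 < κ - 1 := by linarith
  have hc₁B : c₁ < B := by
    rw [hBdef, lt_div_iff₀ h1]
    have : 0 < 1 / κ := by positivity
    nlinarith
  set a := 1 / (κ - 1) with ha_def
  have ha : 0 < a := div_pos one_pos hκ1
  -- from hsmall : B * (c₂ * κ) ^ a < 1
  have hκa : (0:ℝ) < κ ^ a := Real.rpow_pos_of_pos hκ0 a
  have hstep : c₁ * c₂ ^ a * κ ^ a < 1 - 1 / κ := by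
    have := mul_lt_mul_of_pos_right hsmall hκa
    calc c₁ * c₂ ^ a * κ ^ a < (1 - 1/κ) * κ ^ (-a) * κ ^ a := this
      _ = 1 - 1/κ := by
          rw [mul_assoc, ← Real.rpow_add hκ0]
          simp
  have hX : B * (c₂ * κ) ^ a < 1 := by
    rw [Real.mul_rpow hc₂.le hκ0.le]
    rw [hBdef, div_mul_eq_mul_div, div_lt_one h1]
    calc c₁ * (c₂ ^ a * κ ^ a) = c₁ * c₂ ^ a * κ ^ a := by ring
      _ < 1 - 1/κ := hstep
  have hXpos : 0 ≤ B * (c₂ * κ) ^ a := by positivity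
  have hpow : (B * (c₂ * κ) ^ a) ^ (κ - 1) < 1 :=
    Real.rpow_lt_one hXpos hX hκ1
  have heq : (B * (c₂ * κ) ^ a) ^ (κ - 1) = B ^ (κ - 1) * (c₂ * κ) := by
    rw [Real.mul_rpow hB.le (by positivity),
      ← Real.rpow_mul (by positivity : (0:ℝ) ≤ c₂ * κ)]
    have h2 : a * (κ - 1) = 1 := by
      rw [ha_def]; field_simp
    rw [h2, Real.rpow_one]
  rw [heq] at hpow
  -- key : c₂ * B ^ κ < B - c₁
  have hBκ : B ^ κ = B ^ (κ - 1) * B := by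
    rw [← Real.rpow_add_one hB.ne' (κ - 1)]
    ring_nf
  have hBc₁ : B - c₁ = B / κ := by
    have : B * (1 - 1/κ) = c₁ := by
      rw [hBdef]; field_simp
    field_simp at this ⊢
    nlinarith
  have key : c₂ * B ^ κ < B - c₁ := by
    rw [hBκ, hBc₁]
    rw [lt_div_iff₀ hκ0]
    nlinarith [Real.rpow_pos_of_pos hB (κ - 1)]
  -- M t ≠ B on [0,T]
  have hne : ∀ t ∈ Icc 0 T, M t ≠ B := by
    intro t ht hMt
    have := hMineq t ht
    rw [hMt] at this
    linarith
  intro t ht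
  by_contra h
  push_neg at h
  have hlt : B < M t := lt_of_le_of_ne h (Ne.symm (hne t ht))
  have hsub : Icc (0:ℝ) t ⊆ Icc 0 T := Icc_subset_Icc le_rfl ht.2
  have hIVT := intermediate_value_Icc ht.1 (hMcont.mono hsub)
  have hBmem : B ∈ Icc (M 0) (M t) := ⟨by linarith, hlt.le⟩
  obtain ⟨s, hs, hMs⟩ := hIVT hBmem
  exact hne s (hsub hs) hMs
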